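/- Let R be a ring such that for every x ∈ R there exists n(x) ≥ 2 with xRx = x^{n(x)}Rx^{n(x)} (a gsr-ring). Then R/J(R) is reduced. -/

import Mathlib

def IsMaxTwoSided {R : Type*} [Ring R] (P : TwoSidedIdeal R) : Prop :=
  P ≠ ⊤ ∧ ∀ Q : TwoSidedIdeal R, P < Q → Q = ⊤

def InJac {R : Type*} [Ring R] (x : R) : Prop := x ∈ Ideal.jacobson (⊥ : Ideal R)

def IsFullElem {R : Type*} [Ring R] (u : R) : Prop := TwoSidedIdeal.span ({u} : Set R) = ⊤

def FecklyCleanElem {R : Type*} [Ring R] (a : R) : Prop :=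
  ∃ e u : R, a = e + u ∧ IsFullElem u ∧ ∀ r : R, InJac (e * r * (1 - e))

def FecklyCleanRing (R : Type*) [Ring R] : Prop := ∀ a : R, FecklyCleanElem a

lemma isUnit_one_sub_of_mem_jac {R : Type*} [Ring R] (x : R)
    (hx : x ∈ Ideal.jacobson (⊥ : Ideal R)) : IsUnit (1 - x) := by
  obtain ⟨s, hs⟩ := Ideal.exists_mul_sub_mem_of_sub_one_mem_jacobson (1 - x)
    (by simpa using (Ideal.jacobson (⊥ : Ideal R)).neg_mem hx)
  rw [Ideal.mem_bot, sub_eq_zero] at hs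
  have hs1 : s - 1 ∈ Ideal.jacobson (⊥ : Ideal R) := by
    have h' : s - s * x = 1 := by rw [← mul_one s, mul_assoc, one_mul, ← mul_sub]; exact hs
    have h2 : s = 1 + s * x := sub_eq_iff_eq_add.mp h'
    rw [h2, add_sub_cancel_left]
    exact Ideal.mul_mem_left _ _ hx
  obtain ⟨t, ht⟩ := Ideal.exists_mul_sub_mem_of_sub_one_mem_jacobson s hs1
  rw [Ideal.mem_bot, sub_eq_zero] at ht
  have htv : t = 1 - x := by
    calc t = t * (s * (1 - x)) := by rw [hs, mul_one]
    _ = (t * s) * (1 - x) := by rw [mul_assoc]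
    _ = 1 - x := by rw [ht, one_mul]
  exact ⟨⟨1 - x, s, by rw [← htv]; exact ht, hs⟩, rfl⟩

lemma unit_of_sq_jac {R : Type*} [Ring R] (z : R) (hz : z * z ∈ Ideal.jacobson (⊥ : Ideal R)) :
    IsUnit (1 + z) := by
  obtain ⟨u, hu⟩ := isUnit_one_sub_of_mem_jac (z * z) hz
  have hzu : Commute z (u : R) := by
    rw [hu]
    exact (Commute.one_right z).sub_right ((Commute.refl z).mul_right (Commute.refl z))
  have hzi : Commute (1 + z) (↑u⁻¹ : R) := (Commute.one_left _).add_left hzu.units_inv_right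
  have h1 : (1 + z) * (1 - z) = 1 - z * z := by noncomm_ring
  have h2 : (1 - z) * (1 + z) = 1 - z * z := by noncomm_ring
  exact ⟨⟨1 + z, (1 - z) * ↑u⁻¹,
    by rw [← mul_assoc, h1, ← hu]; simp,
    by rw [mul_assoc, ← hzi.eq, ← mul_assoc, h2, ← hu]; simp⟩, rfl⟩

theorem stmt12 {R : Type*} [Ring R]
    (h : ∀ x : R, ∃ n : ℕ, 2 ≤ n ∧
      {y : R | ∃ r : R, y = x * r * x} = {y : R | ∃ r : R, y = x ^ n * r * x ^ n})
    (J : TwoSidedIdeal R) (hJ : ∀ x : R, x ∈ J ↔ InJac x) :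
    ∀ x : J.ringCon.Quotient, x ^ 2 = 0 → x = 0 := by
  intro x hx
  induction x using Quotient.inductionOn' with
  | h a =>
  have hx' : ((a * a : R) : J.ringCon.Quotient) = ((0 : R) : J.ringCon.Quotient) := by
    rw [RingCon.coe_mul, RingCon.coe_zero]
    rw [← sq]; exact hx
  have ha2 : a * a ∈ J := (J.mem_iff _).2 (J.ringCon.eq.1 hx')
  obtain ⟨n, hn2, hset⟩ := h a
  have hpow : a ^ n ∈ J := by
    obtain ⟨m, rfl⟩ := Nat.exists_eq_add_of_le hn2
    rw [pow_add, sq]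
    exact J.mul_mem_right _ _ ha2
  have hmid : ∀ r : R, a * r * a ∈ J := by
    intro r
    have hm : a * r * a ∈ {y : R | ∃ r : R, y = a * r * a} := ⟨r, rfl⟩
    rw [hset] at hm
    obtain ⟨s, hs⟩ := hm
    rw [hs]
    exact J.mul_mem_right _ _ (J.mul_mem_right _ _ hpow)
  have haJ : a ∈ J := by
    rw [hJ]
    show a ∈ Ideal.jacobson (⊥ : Ideal R)
    rw [Ideal.mem_jacobson_iff]
    intro y
    have hww : (y * a) * (y * a) ∈ Ideal.jacobson (⊥ : Ideal R) := by
      have heq : (y * a) * (y * a) = y * (a * y * a) := by noncomm_ring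
      rw [heq]
      exact Ideal.mul_mem_left _ _ ((hJ _).1 (hmid y))
    obtain ⟨u, hu⟩ := unit_of_sq_jac (y * a) hww
    refine ⟨↑u⁻¹, ?_⟩
    have heq2 : (↑u⁻¹ : R) * y * a + ↑u⁻¹ - 1 = ↑u⁻¹ * (1 + y * a) - 1 := by noncomm_ring
    rw [Ideal.mem_bot, heq2, ← hu, sub_eq_zero]
    simp
  show ((a : R) : J.ringCon.Quotient) = 0
  rw [← RingCon.coe_zero]
  exact J.ringCon.eq.2 ((J.mem_iff _).1 haJ)
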